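/- Let f : ℝ^P → ℝ be a one-hidden-layer ReLU network (scalar output) and let B ⊆ ℝ^P be a nonempty compact convex set. If for every code c ∈ {0,1}^M with R_c ∩ B ≠ ∅ the affine function x ↦ ⟨ŵ_c, x⟩ + b̂_c (the local linear model of f on R_c) has nonnegative partial derivative in coordinate j (i.e., (ŵ_c)_j ≥ 0), then f is monotonically nondecreasing in coordinate j on B: for x, y ∈ B with x_k = y_k for all k ≠ j and x_j ≤ y_j, f(x) ≤ f(y). -/

import Mathlib

open Matrix

def polytope {P M : ℕ} (w : Fin M → Fin P → ℝ) (b : Fin M → ℝ) (c : Fin M → Bool) :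
    Set (Fin P → ℝ) :=
  {x | ∀ m, if c m then 0 ≤ w m ⬝ᵥ x + b m else w m ⬝ᵥ x + b m ≤ 0}

/-- Right derivative of a single ReLU unit `s ↦ w * max (a*s+c) 0`. -/
lemma relu_unit_right_deriv (w a c t : ℝ) :
    HasDerivWithinAt (fun s => w * max (a * s + c) 0)
      (w * (if 0 < a * t + c ∨ (a * t + c = 0 ∧ 0 < a) then a else 0)) (Set.Ici t) t := by
  have haff : HasDerivWithinAt (fun s => a * s + c) a (Set.Ici t) t := by
    simpa using (((hasDerivAt_id t).const_mul a).add_const c).hasDerivWithinAt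
  have hzero : HasDerivWithinAt (fun _ : ℝ => (0 : ℝ)) 0 (Set.Ici t) t :=
    (hasDerivAt_const t 0).hasDerivWithinAt
  have hcont : Continuous (fun s : ℝ => a * s + c) := by continuity
  by_cases hpos : 0 < a * t + c
  · rw [if_pos (Or.inl hpos)]
    refine HasDerivWithinAt.const_mul w ?_
    have hev : ∀ᶠ s in nhds t, 0 < a * s + c :=
      (hcont.tendsto t).eventually (eventually_gt_nhds hpos)
    refine (haff.congr_of_eventuallyEq ?_ ?_)
    · exact (hev.filter_mono nhdsWithin_le_nhds).mono fun s hs => (max_eq_left hs.le)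
    · exact max_eq_left hpos.le
  · by_cases hzero' : a * t + c = 0
    · by_cases hA : 0 < a
      · rw [if_pos (Or.inr ⟨hzero', hA⟩)]
        refine HasDerivWithinAt.const_mul w ?_
        refine haff.congr (fun s hs => ?_) ?_
        · have : a * s + c = a * (s - t) + (a * t + c) := by ring
          rw [this, hzero', add_zero]
          exact max_eq_left (mul_nonneg hA.le (sub_nonneg.2 hs))
        · rw [hzero']; simp
      · have hnot : ¬ (0 < a * t + c ∨ (a * t + c = 0 ∧ 0 < a)) := by
          push_neg; exact ⟨not_lt.1 hpos, fun _ => not_lt.1 hA⟩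
        rw [if_neg hnot, mul_zero]
        have h2 : HasDerivWithinAt (fun s => max (a * s + c) 0) 0 (Set.Ici t) t := by
          refine hzero.congr (fun s hs => ?_) ?_
          · have : a * s + c = a * (s - t) + (a * t + c) := by ring
            rw [this, hzero', add_zero]
            exact max_eq_right (mul_nonpos_of_nonpos_of_nonneg (not_lt.1 hA) (sub_nonneg.2 hs))
          · rw [hzero']; simp
        simpa using h2.const_mul w
    · have hneg : a * t + c < 0 := lt_of_le_of_ne (not_lt.1 hpos) hzero'
      have hnot : ¬ (0 < a * t + c ∨ (a * t + c = 0 ∧ 0 < a)) := by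
        push_neg; exact ⟨not_lt.1 hpos, fun h => absurd h hzero'⟩
      rw [if_neg hnot, mul_zero]
      have hev : ∀ᶠ s in nhds t, a * s + c < 0 :=
        (hcont.tendsto t).eventually (eventually_lt_nhds hneg)
      have h2 : HasDerivWithinAt (fun s => max (a * s + c) 0) 0 (Set.Ici t) t := by
        refine hzero.congr_of_eventuallyEq ?_ ?_
        · exact (hev.filter_mono nhdsWithin_le_nhds).mono fun s hs => (max_eq_right hs.le)
        · exact max_eq_right hneg.le
      simpa using h2.const_mul w

/-- Local monotonicity verification: if every local linear model of the scalar ReLU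
network on a polytope meeting `B` has nonnegative coefficient in coordinate `j`, then
the network is nondecreasing in coordinate `j` on the compact convex set `B`. -/
theorem monotone_of_local_slopes_nonneg {P M : ℕ}
    (W : Fin M → Fin P → ℝ) (b : Fin M → ℝ) (wo : Fin M → ℝ) (bo : ℝ)
    (B : Set (Fin P → ℝ)) (hB : B.Nonempty) (hBc : IsCompact B) (hBconv : Convex ℝ B)
    (j : Fin P)
    (hslope : ∀ c : Fin M → Bool, (polytope W b c ∩ B).Nonempty →
      0 ≤ ∑ m, wo m * (if c m then W m j else 0)) :
    ∀ x ∈ B, ∀ y ∈ B, (∀ k, k ≠ j → x k = y k) → x j ≤ y j →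
      wo ⬝ᵥ (fun m => max (W m ⬝ᵥ x + b m) 0) + bo
        ≤ wo ⬝ᵥ (fun m => max (W m ⬝ᵥ y + b m) 0) + bo := by
  intro x hx y hy hagree hxy
  rcases eq_or_lt_of_le hxy with heq | hlt
  · have hxyeq : x = y := by
      funext k
      by_cases hk : k = j
      · subst hk; exact heq
      · exact hagree k hk
    rw [hxyeq]
  -- main case : x j < y j
  set a : Fin M → ℝ := fun m => W m j with ha
  set cc : Fin M → ℝ := fun m => W m ⬝ᵥ x + b m - W m j * x j with hcc
  set z : ℝ → (Fin P → ℝ) := fun t k => if k = j then t else x k with hzdef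
  have hzx : z (x j) = x := by funext k; by_cases hk : k = j <;> simp [hzdef, hk]
  have hzy : z (y j) = y := by
    funext k
    by_cases hk : k = j
    · subst hk; simp [hzdef]
    · simpa [hzdef, hk] using hagree k hk
  have hkey : ∀ m t, W m ⬝ᵥ z t + b m = a m * t + cc m := by
    intro m t
    have h1 : W m ⬝ᵥ z t = W m ⬝ᵥ x + W m j * (t - x j) := by
      simp only [dotProduct]
      have h2 : ∀ k ∈ Finset.univ, W m k * z t k =
          (if k = j then W m j * (t - x j) else 0) + W m k * x k := by
        intro k _
        by_cases hk : k = j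
        · subst hk; simp [hzdef]; ring
        · simp [hzdef, hk]
      rw [Finset.sum_congr rfl h2, Finset.sum_add_distrib, Finset.sum_ite_eq' Finset.univ j]
      simp [add_comm]
    rw [h1]; simp only [ha, hcc]; ring
  have hzB : ∀ t ∈ Set.Icc (x j) (y j), z t ∈ B := by
    intro t ht
    set s : ℝ := (t - x j) / (y j - x j) with hs
    have hden : (0:ℝ) < y j - x j := sub_pos.2 hlt
    have hs0 : 0 ≤ s := div_nonneg (sub_nonneg.2 ht.1) hden.le
    have hs1 : s ≤ 1 := (div_le_one hden).2 (sub_le_sub_right ht.2 _)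
    have hmem := hBconv hx hy (by linarith : (0:ℝ) ≤ 1 - s) hs0 (by ring)
    have hzeq : z t = (1 - s) • x + s • y := by
      funext k
      by_cases hk : k = j
      · have hcan : s * (y j - x j) = t - x j := div_mul_cancel₀ _ hden.ne'
        simp [hzdef, hk]
        nlinarith [hcan]
      · have hxk : y k = x k := (hagree k hk).symm
        simp only [hzdef, if_neg hk, Pi.add_apply, Pi.smul_apply, smul_eq_mul, hxk]
        ring
    rw [hzeq]; exact hmem
  -- the 1-D function along the segment
  set h : ℝ → ℝ := fun t => (∑ m, wo m * max (a m * t + cc m) 0) + bo with hh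
  classical
  set d : ℝ → ℝ := fun t => ∑ m, wo m *
      (if 0 < a m * t + cc m ∨ (a m * t + cc m = 0 ∧ 0 < a m) then a m else 0) with hd
  have hderiv : ∀ t, HasDerivWithinAt h (d t) (Set.Ici t) t := by
    intro t
    refine HasDerivWithinAt.add_const bo ?_
    exact HasDerivWithinAt.fun_sum fun m _ => relu_unit_right_deriv (wo m) (a m) (cc m) t
  have hcont : Continuous h := by
    refine (continuous_finset_sum _ fun m _ => ?_).add continuous_const
    exact continuous_const.mul ((by continuity : Continuous fun t => a m * t + cc m).max continuous_const)
  have hd0 : ∀ t ∈ Set.Ico (x j) (y j), 0 ≤ d t := by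
    intro t ht
    set c : Fin M → Bool := fun m =>
      decide (0 < a m * t + cc m ∨ (a m * t + cc m = 0 ∧ 0 < a m)) with hcdef
    have hmem : z t ∈ polytope W b c ∩ B := by
      refine ⟨fun m => ?_, hzB t ⟨ht.1, ht.2.le⟩⟩
      by_cases hcm : 0 < a m * t + cc m ∨ (a m * t + cc m = 0 ∧ 0 < a m)
      · simp only [hcdef, decide_eq_true_eq, if_pos hcm]
        rw [hkey m t]
        rcases hcm with hp | ⟨he, _⟩
        · exact hp.le
        · exact he.ge
      · simp only [hcdef, decide_eq_true_eq, if_neg hcm]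
        push_neg at hcm
        rw [hkey m t]
        exact hcm.1
    have hsl := hslope c ⟨z t, hmem⟩
    calc (0:ℝ) ≤ ∑ m, wo m * (if c m then W m j else 0) := hsl
      _ = d t := Finset.sum_congr rfl fun m _ => by
          by_cases hc : 0 < a m * t + cc m ∨ (a m * t + cc m = 0 ∧ 0 < a m)
          · simp [hcdef, hc, ha]
          · simp [hcdef, hc, ha]
  have key := image_le_of_deriv_right_le_deriv_boundary
    (f := fun _ : ℝ => h (x j)) (f' := fun _ : ℝ => 0) (a := x j) (b := y j)
    continuousOn_const (fun t _ => (hasDerivAt_const t _).hasDerivWithinAt)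
    (le_refl _) hcont.continuousOn (fun t _ => hderiv t) hd0
  have hfin : h (x j) ≤ h (y j) := key ⟨hxy, le_refl _⟩
  have hL : wo ⬝ᵥ (fun m => max (W m ⬝ᵥ x + b m) 0) + bo = h (x j) := by
    simp only [hh, dotProduct]
    congr 1
    refine Finset.sum_congr rfl fun m _ => ?_
    rw [← hkey m (x j), hzx]
    rfl
  have hR : wo ⬝ᵥ (fun m => max (W m ⬝ᵥ y + b m) 0) + bo = h (y j) := by
    simp only [hh, dotProduct]
    congr 1
    refine Finset.sum_congr rfl fun m _ => ?_
    rw [← hkey m (y j), hzy]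
    rfl
  rw [hL, hR]; exact hfin
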